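/- A solution ψ on the class of monotone games satisfies AE (average efficiency), S (symmetry), I (invariance), cParM (c-participation monotonicity) and RcParM (relative c-participation monotonicity) if and only if ψ is the average participation solution AP; in particular AP is the unique solution on the class of monotone games satisfying these five properties. -/

import Mathlib

open Finset
open scoped Classical

/-- A monotone game on agent set `Fin n`: `u ∅ = 0` and `u` is monotone w.r.t. inclusion. -/
def IsMonotoneGame (n : ℕ) (u : Finset (Fin n) → ℝ) : Prop :=
  u ∅ = 0 ∧ ∀ S T : Finset (Fin n), S ⊆ T → u S ≤ u T

/-- The contribution indicator: `c(u,i) = 0` if `u (S ∪ {i}) = u S` for every `S`,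
and `c(u,i) = 1` otherwise. -/
noncomputable def contrib {n : ℕ} (u : Finset (Fin n) → ℝ) (i : Fin n) : ℝ :=
  if ∀ S : Finset (Fin n), u (insert i S) = u S then 0 else 1

/-- The average participation solution
`AP_i(u) = ∑_{S ⊆ N \ {i}} w ⬝ (c(u,i) / (∑_{j ∈ S} c(u,j) + 1)) ⬝ u (S ∪ {i})`,
where `w = 1 / (2 ^ n - 1)`. -/
noncomputable def AP {n : ℕ} (u : Finset (Fin n) → ℝ) (i : Fin n) : ℝ :=
  ∑ S ∈ (Finset.univ.erase i).powerset,
    (1 / (2 ^ n - 1 : ℝ)) * (contrib u i / ((∑ j ∈ S, contrib u j) + 1)) * u (insert i S)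

namespace APaux

variable {n : ℕ}

lemma contrib_cases (u : Finset (Fin n) → ℝ) (i : Fin n) :
    contrib u i = 0 ∨ contrib u i = 1 := by
  unfold contrib; split <;> simp

lemma contrib_nonneg (u : Finset (Fin n) → ℝ) (i : Fin n) : 0 ≤ contrib u i := by
  rcases contrib_cases u i with h | h <;> rw [h] <;> norm_num

lemma null_of_contrib_eq_zero {u : Finset (Fin n) → ℝ} {i : Fin n}
    (h : contrib u i = 0) : ∀ S, u (insert i S) = u S := by
  unfold contrib at h
  by_contra hc
  rw [if_neg hc] at h
  norm_num at h

lemma contrib_eq_zero {u : Finset (Fin n) → ℝ} {i : Fin n}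
    (h : ∀ S, u (insert i S) = u S) : contrib u i = 0 := by
  unfold contrib; rw [if_pos h]

lemma contrib_eq_one {u : Finset (Fin n) → ℝ} {i : Fin n}
    (h : ¬ ∀ S, u (insert i S) = u S) : contrib u i = 1 := by
  unfold contrib; rw [if_neg h]

lemma sigma_nonneg (u : Finset (Fin n) → ℝ) (S : Finset (Fin n)) :
    0 ≤ ∑ j ∈ S, contrib u j :=
  Finset.sum_nonneg fun j _ => contrib_nonneg u j

lemma sigma_add_one_pos (u : Finset (Fin n) → ℝ) (S : Finset (Fin n)) :
    0 < (∑ j ∈ S, contrib u j) + 1 := by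
  have := sigma_nonneg u S; linarith

lemma w_pos (hn : 1 ≤ n) : 0 < (1 / (2 ^ n - 1 : ℝ)) := by
  have h2 : (1:ℝ) < 2 ^ n := by
    calc (1:ℝ) < 2 ^ 1 := by norm_num
    _ ≤ 2 ^ n := by apply pow_le_pow_right₀ <;> norm_num [hn]
  have : (0:ℝ) < 2 ^ n - 1 := by linarith
  positivity

lemma u_nonneg {u : Finset (Fin n) → ℝ} (hu : IsMonotoneGame n u) (T : Finset (Fin n)) :
    0 ≤ u T := by
  have := hu.2 ∅ T (empty_subset T); rw [hu.1] at this; exact this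

lemma drop_null {u : Finset (Fin n) → ℝ}
    (D : Finset (Fin n)) (hD : ∀ j ∈ D, contrib u j = 0) (T : Finset (Fin n)) :
    u (T ∪ D) = u T := by
  induction D using Finset.induction_on generalizing T with
  | empty => simp
  | @insert j D hj ih =>
    rw [Finset.union_insert, null_of_contrib_eq_zero (hD j (mem_insert_self j D)),
      ih (fun k hk => hD k (mem_insert_of_mem hk)) T]

/-- the set of contributors -/
noncomputable def Pset (u : Finset (Fin n) → ℝ) : Finset (Fin n) :=
  univ.filter (fun j => contrib u j = 1)

lemma mem_Pset {u : Finset (Fin n) → ℝ} {j : Fin n} :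
    j ∈ Pset u ↔ contrib u j = 1 := by simp [Pset]

lemma not_mem_Pset {u : Finset (Fin n) → ℝ} {j : Fin n} :
    j ∉ Pset u ↔ contrib u j = 0 := by
  rw [mem_Pset]
  rcases contrib_cases u j with h | h <;> simp [h]

lemma restrict {u : Finset (Fin n) → ℝ} (T : Finset (Fin n)) :
    u T = u (T ∩ Pset u) := by
  have h1 : (T ∩ Pset u) ∪ (T \ Pset u) = T := by
    ext x; simp; tauto
  conv_lhs => rw [← h1]
  exact drop_null _ (fun j hj => by
    simp only [mem_sdiff] at hj
    exact not_mem_Pset.mp hj.2) _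

end APaux


namespace APaux
variable {n : ℕ}

lemma swap_sum (c : Fin n → ℝ) {i k : Fin n} (hik : i ≠ k) (hc : c i = c k)
    (γ : ℝ) (F : Finset (Fin n) → ℝ) :
    ∑ S ∈ univ.powerset.filter (fun S => i ∉ S ∧ k ∈ S),
        γ / ((∑ j ∈ S, c j) + 1) * F (insert i S)
    = ∑ S ∈ univ.powerset.filter (fun S => k ∉ S ∧ i ∈ S),
        γ / ((∑ j ∈ S, c j) + 1) * F (insert k S) := by
  apply Finset.sum_nbij' (fun S => insert i (S.erase k)) (fun S => insert k (S.erase i))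
  · intro S hS
    simp only [mem_filter, mem_powerset] at hS ⊢
    refine ⟨subset_univ _, ?_, mem_insert_self _ _⟩
    simp only [mem_insert]
    push_neg
    exact ⟨hik.symm, notMem_erase _ _⟩
  · intro S hS
    simp only [mem_filter, mem_powerset] at hS ⊢
    refine ⟨subset_univ _, ?_, mem_insert_self _ _⟩
    simp only [mem_insert]
    push_neg
    exact ⟨hik, notMem_erase _ _⟩
  · intro S hS
    simp only [mem_filter, mem_powerset] at hS
    rw [erase_insert (by simp [hS.2.1]), insert_erase hS.2.2]
  · intro S hS
    simp only [mem_filter, mem_powerset] at hS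
    rw [erase_insert (by simp [hS.2.1]), insert_erase hS.2.2]
  · intro S hS
    simp only [mem_filter, mem_powerset] at hS
    have hsum : ∑ j ∈ insert i (S.erase k), c j = ∑ j ∈ S, c j := by
      rw [Finset.sum_insert (by simp [hS.2.1])]
      have := Finset.add_sum_erase S c hS.2.2
      linarith [hc]
    have hset : insert k (insert i (S.erase k)) = insert i S := by
      rw [Finset.insert_comm, insert_erase hS.2.2]
    rw [hsum, hset]

lemma split_swap (c : Fin n → ℝ) {i k : Fin n} (hik : i ≠ k) (hc : c i = c k)
    (γ : ℝ) (F : Finset (Fin n) → ℝ) :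
    ∑ S ∈ univ.powerset.filter (fun S => i ∉ S),
        γ / ((∑ j ∈ S, c j) + 1) * F (insert i S)
    - ∑ S ∈ univ.powerset.filter (fun S => k ∉ S),
        γ / ((∑ j ∈ S, c j) + 1) * F (insert k S)
    = ∑ S ∈ univ.powerset.filter (fun S => i ∉ S ∧ k ∉ S),
        γ / ((∑ j ∈ S, c j) + 1) * (F (insert i S) - F (insert k S)) := by
  have e1 := Finset.sum_filter_add_sum_filter_not
    (univ.powerset.filter (fun S : Finset (Fin n) => i ∉ S)) (fun S => k ∈ S)
    (fun S => γ / ((∑ j ∈ S, c j) + 1) * F (insert i S))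
  have e2 := Finset.sum_filter_add_sum_filter_not
    (univ.powerset.filter (fun S : Finset (Fin n) => k ∉ S)) (fun S => i ∈ S)
    (fun S => γ / ((∑ j ∈ S, c j) + 1) * F (insert k S))
  rw [filter_filter, filter_filter] at e1 e2
  have e3 : (univ.powerset.filter (fun S : Finset (Fin n) => i ∉ S ∧ k ∈ S)) =
      (univ.powerset.filter (fun S : Finset (Fin n) => ¬i ∈ S ∧ k ∈ S)) := by rfl
  have hswap := swap_sum c hik hc γ F
  have e4 : (univ.powerset.filter (fun S : Finset (Fin n) => ¬k ∈ S ∧ i ∈ S)) =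
      (univ.powerset.filter (fun S : Finset (Fin n) => k ∉ S ∧ i ∈ S)) := by rfl
  have e5 : (univ.powerset.filter (fun S : Finset (Fin n) => ¬k ∈ S ∧ ¬i ∈ S)) =
      (univ.powerset.filter (fun S : Finset (Fin n) => ¬i ∈ S ∧ ¬k ∈ S)) := by
    apply filter_congr; intro S _; constructor <;> exact fun h => ⟨h.2, h.1⟩
  rw [e5] at e2
  have esub : ∑ S ∈ univ.powerset.filter (fun S : Finset (Fin n) => ¬i ∈ S ∧ ¬k ∈ S),
        γ / ((∑ j ∈ S, c j) + 1) * F (insert i S)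
      - ∑ S ∈ univ.powerset.filter (fun S : Finset (Fin n) => ¬i ∈ S ∧ ¬k ∈ S),
        γ / ((∑ j ∈ S, c j) + 1) * F (insert k S)
      = ∑ S ∈ univ.powerset.filter (fun S : Finset (Fin n) => i ∉ S ∧ k ∉ S),
        γ / ((∑ j ∈ S, c j) + 1) * (F (insert i S) - F (insert k S)) := by
    rw [← Finset.sum_sub_distrib]
    apply Finset.sum_congr rfl
    intro S _; ring
  rw [← esub]
  rw [← e1, ← e2] at *
  rw [e3] at hswap
  linarith [hswap]

end APaux
namespace APaux
variable {n : ℕ}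

lemma AP_filter (u : Finset (Fin n) → ℝ) (i : Fin n) :
    AP u i = ∑ S ∈ univ.powerset.filter (fun S => i ∉ S),
      (1 / (2 ^ n - 1 : ℝ)) * (contrib u i / ((∑ j ∈ S, contrib u j) + 1)) * u (insert i S) := by
  apply Finset.sum_congr
  · ext S
    simp [Finset.subset_erase, Finset.mem_powerset, Finset.subset_univ]
  · intros; rfl

lemma AP_zero {u : Finset (Fin n) → ℝ} {i : Fin n} (h : contrib u i = 0) :
    AP u i = 0 := by
  unfold AP
  apply Finset.sum_eq_zero
  intro S _
  rw [h]
  ring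

lemma AP_insert_form (u : Finset (Fin n) → ℝ) (i : Fin n) :
    AP u i = ∑ T ∈ univ.powerset.filter (fun T => i ∈ T),
      (1 / (2 ^ n - 1 : ℝ)) * (contrib u i / ((∑ j ∈ T.erase i, contrib u j) + 1)) * u T := by
  rw [AP_filter]
  apply Finset.sum_nbij' (fun S => insert i S) (fun T => T.erase i)
  · intro S hS
    simp only [mem_filter, mem_powerset] at hS ⊢
    exact ⟨subset_univ _, mem_insert_self _ _⟩
  · intro T hT
    simp only [mem_filter, mem_powerset] at hT ⊢
    exact ⟨subset_univ _, notMem_erase _ _⟩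
  · intro S hS
    simp only [mem_filter, mem_powerset] at hS
    rw [erase_insert hS.2]
  · intro T hT
    simp only [mem_filter, mem_powerset] at hT
    rw [insert_erase hT.2]
  · intro S hS
    simp only [mem_filter, mem_powerset] at hS
    rw [erase_insert hS.2]

lemma AP_AE (hn : 1 ≤ n) (u : Finset (Fin n) → ℝ) (hu : IsMonotoneGame n u) :
    ∑ i, AP u i = (1 / (2 ^ n - 1 : ℝ)) * ∑ S ∈ (univ : Finset (Fin n)).powerset, u S := by
  have step1 : ∑ i, AP u i = ∑ T ∈ (univ : Finset (Fin n)).powerset, ∑ i ∈ T,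
      (1 / (2 ^ n - 1 : ℝ)) * (contrib u i / ((∑ j ∈ T.erase i, contrib u j) + 1)) * u T := by
    have : ∀ i : Fin n, AP u i = ∑ T ∈ (univ : Finset (Fin n)).powerset,
        if i ∈ T then
          (1 / (2 ^ n - 1 : ℝ)) * (contrib u i / ((∑ j ∈ T.erase i, contrib u j) + 1)) * u T
        else 0 := by
      intro i
      rw [AP_insert_form, Finset.sum_filter]
    rw [Finset.sum_congr rfl (fun i _ => this i), Finset.sum_comm]
    apply Finset.sum_congr rfl
    intro T _
    rw [Finset.sum_ite_mem, Finset.univ_inter]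
  rw [step1, Finset.mul_sum]
  apply Finset.sum_congr rfl
  intro T _
  by_cases hσ : (∑ j ∈ T, contrib u j) = 0
  · have hc0 : ∀ i ∈ T, contrib u i = 0 := by
      intro i hi
      have := (Finset.sum_eq_zero_iff_of_nonneg (fun j _ => contrib_nonneg u j)).mp hσ
      exact this i hi
    have hTP : T ∩ Pset u = ∅ := by
      ext x
      simp only [mem_inter, mem_Pset, notMem_empty, iff_false]
      rintro ⟨hx, hc⟩
      rw [hc0 x hx] at hc; norm_num at hc
    have huT : u T = 0 := by
      rw [restrict (u := u) T, hTP, hu.1]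
    rw [huT]
    rw [mul_zero]
    apply Finset.sum_eq_zero
    intro i hi
    rw [hc0 i hi]
    ring
  · have key : ∀ i ∈ T,
        (1 / (2 ^ n - 1 : ℝ)) * (contrib u i / ((∑ j ∈ T.erase i, contrib u j) + 1)) * u T
        = (1 / (2 ^ n - 1 : ℝ)) * u T * (contrib u i / (∑ j ∈ T, contrib u j)) := by
      intro i hi
      rcases contrib_cases u i with h | h
      · rw [h]; ring
      · have herase : (∑ j ∈ T.erase i, contrib u j) + 1 = ∑ j ∈ T, contrib u j := by
          have := Finset.add_sum_erase T (contrib u) hi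
          rw [h] at this
          linarith
        rw [herase]; ring
    rw [Finset.sum_congr rfl key, ← Finset.mul_sum, ← Finset.sum_div, div_self hσ]
    ring

end APaux
namespace APaux
variable {n : ℕ}

lemma null_transfer {u : Finset (Fin n) → ℝ} {i j : Fin n}
    (hij : i ≠ j)
    (h : ∀ S : Finset (Fin n), i ∉ S → j ∉ S → u (insert i S) = u (insert j S))
    (hi : ∀ S, u (insert i S) = u S) : ∀ S, u (insert j S) = u S := by
  intro S
  by_cases hjS : j ∈ S
  · rw [insert_eq_self.mpr hjS]
  by_cases hiS : i ∈ S
  · set S' := S.erase i with hS'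
    have hi' : i ∉ S' := notMem_erase _ _
    have hj' : j ∉ S' := fun hh => hjS (mem_of_mem_erase hh)
    have e1 : insert i S' = S := insert_erase hiS
    calc u (insert j S) = u (insert j (insert i S')) := by rw [e1]
      _ = u (insert i (insert j S')) := by rw [Finset.insert_comm]
      _ = u (insert j S') := hi _
      _ = u (insert i S') := (h S' hi' hj').symm
      _ = u S := by rw [e1]
  · calc u (insert j S) = u (insert i S) := (h S hiS hjS).symm
      _ = u S := hi S

lemma contrib_symm {u : Finset (Fin n) → ℝ} {i j : Fin n} (hij : i ≠ j)
    (h : ∀ S : Finset (Fin n), i ∉ S → j ∉ S → u (insert i S) = u (insert j S)) :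
    contrib u i = contrib u j := by
  have hiff : (∀ S, u (insert i S) = u S) ↔ (∀ S, u (insert j S) = u S) :=
    ⟨null_transfer hij h, null_transfer hij.symm (fun S hj hi => (h S hi hj).symm)⟩
  unfold contrib
  rw [if_congr hiff rfl rfl]

lemma AP_S (u : Finset (Fin n) → ℝ) (i j : Fin n)
    (h : ∀ S : Finset (Fin n), i ∉ S → j ∉ S → u (insert i S) = u (insert j S)) :
    AP u i = AP u j := by
  rcases eq_or_ne i j with rfl | hij
  · rfl
  have hc := contrib_symm hij h
  have hform : ∀ p : Fin n, contrib u p = contrib u i → AP u p =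
      ∑ S ∈ univ.powerset.filter (fun S => p ∉ S),
        ((1 / (2 ^ n - 1 : ℝ)) * contrib u i) / ((∑ j ∈ S, contrib u j) + 1) * u (insert p S) := by
    intro p hp
    rw [AP_filter]
    apply Finset.sum_congr rfl
    intro S _
    rw [hp]
    ring
  rw [hform i rfl, hform j hc.symm]
  have hsplit := split_swap (contrib u) hij hc ((1 / (2 ^ n - 1 : ℝ)) * contrib u i) u
  have hzero : ∑ S ∈ univ.powerset.filter (fun S => i ∉ S ∧ j ∉ S),
      ((1 / (2 ^ n - 1 : ℝ)) * contrib u i) / ((∑ j ∈ S, contrib u j) + 1)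
        * (u (insert i S) - u (insert j S)) = 0 := by
    apply Finset.sum_eq_zero
    intro S hS
    simp only [mem_filter] at hS
    rw [h S hS.2.1 hS.2.2]
    ring
  rw [hzero] at hsplit
  linarith

lemma AP_sub {u v : Finset (Fin n) → ℝ}
    (hcv : ∀ j : Fin n, contrib u j = contrib v j) (i : Fin n) :
    AP u i - AP v i = ∑ S ∈ univ.powerset.filter (fun S => i ∉ S),
      ((1 / (2 ^ n - 1 : ℝ)) * contrib u i) / ((∑ j ∈ S, contrib u j) + 1)
        * (u (insert i S) - v (insert i S)) := by
  rw [AP_filter, AP_filter]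
  simp only [← hcv]
  rw [← Finset.sum_sub_distrib]
  apply Finset.sum_congr rfl
  intro S _
  ring

lemma AP_cParM (hn : 1 ≤ n) (u v : Finset (Fin n) → ℝ)
    (hcv : ∀ j : Fin n, contrib u j = contrib v j) (i : Fin n)
    (hdom : ∀ S : Finset (Fin n), u (insert i S) ≥ v (insert i S)) :
    AP u i ≥ AP v i := by
  have := AP_sub hcv i
  have hnn : ∀ S ∈ univ.powerset.filter (fun S : Finset (Fin n) => i ∉ S),
      0 ≤ ((1 / (2 ^ n - 1 : ℝ)) * contrib u i) / ((∑ j ∈ S, contrib u j) + 1)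
        * (u (insert i S) - v (insert i S)) := by
    intro S _
    apply mul_nonneg
    · apply div_nonneg
      · exact mul_nonneg (le_of_lt (w_pos hn)) (contrib_nonneg u i)
      · exact le_of_lt (sigma_add_one_pos u S)
    · linarith [hdom S]
  have := Finset.sum_nonneg hnn
  linarith

lemma AP_RcParM (hn : 1 ≤ n) (u v : Finset (Fin n) → ℝ)
    (hcv : ∀ j : Fin n, contrib u j = contrib v j) (i k : Fin n)
    (hik : contrib u i = contrib u k)
    (hdom : ∀ S : Finset (Fin n), i ∉ S → k ∉ S →
      u (insert i S) - v (insert i S) ≥ u (insert k S) - v (insert k S)) :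
    AP u i - AP v i ≥ AP u k - AP v k := by
  rcases eq_or_ne i k with rfl | hne
  · exact le_refl _
  rw [AP_sub hcv i, AP_sub hcv k]
  have hsplit := split_swap (contrib u) hne hik ((1 / (2 ^ n - 1 : ℝ)) * contrib u i)
    (fun T => u T - v T)
  have hk : ∀ S : Finset (Fin n),
      ((1 / (2 ^ n - 1 : ℝ)) * contrib u k) / ((∑ j ∈ S, contrib u j) + 1)
        * (u (insert k S) - v (insert k S))
      = ((1 / (2 ^ n - 1 : ℝ)) * contrib u i) / ((∑ j ∈ S, contrib u j) + 1)
        * (u (insert k S) - v (insert k S)) := by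
    intro S; rw [hik]
  rw [Finset.sum_congr rfl (fun S _ => hk S)]
  rw [ge_iff_le, ← sub_nonneg, hsplit]
  apply Finset.sum_nonneg
  intro S hS
  simp only [mem_filter] at hS
  apply mul_nonneg
  · apply div_nonneg
    · exact mul_nonneg (le_of_lt (w_pos hn)) (contrib_nonneg u i)
    · exact le_of_lt (sigma_add_one_pos u S)
  · have := hdom S hS.2.1 hS.2.2
    simp only [ge_iff_le] at this
    linarith

end APaux
namespace APaux
variable {n : ℕ}

def Sat (n : ℕ) (ψ : (Finset (Fin n) → ℝ) → Fin n → ℝ) : Prop :=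
    (∀ u, IsMonotoneGame n u →
        ∑ i, ψ u i =
          (1 / (2 ^ n - 1 : ℝ)) * ∑ S ∈ (Finset.univ : Finset (Fin n)).powerset, u S) ∧
     (∀ u, IsMonotoneGame n u → ∀ i j : Fin n,
        (∀ S : Finset (Fin n), i ∉ S → j ∉ S → u (insert i S) = u (insert j S)) →
        ψ u i = ψ u j) ∧
     (∀ u, IsMonotoneGame n u → ∀ i : Fin n, contrib u i = 0 → ψ u i = 0) ∧
     (∀ u v, IsMonotoneGame n u → IsMonotoneGame n v →
        (∀ j : Fin n, contrib u j = contrib v j) → ∀ i : Fin n,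
        (∀ S : Finset (Fin n), u (insert i S) ≥ v (insert i S)) → ψ u i ≥ ψ v i) ∧
     (∀ u v, IsMonotoneGame n u → IsMonotoneGame n v →
        (∀ j : Fin n, contrib u j = contrib v j) → ∀ i k : Fin n,
        contrib u i = contrib u k →
        (∀ S : Finset (Fin n), i ∉ S → k ∉ S →
          u (insert i S) - v (insert i S) ≥ u (insert k S) - v (insert k S)) →
        ψ u i - ψ v i ≥ ψ u k - ψ v k)

lemma sat_AP (hn : 1 ≤ n) : Sat n (AP : (Finset (Fin n) → ℝ) → Fin n → ℝ) :=
  ⟨fun u hu => AP_AE hn u hu,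
   fun u _ i j h => AP_S u i j h,
   fun u _ i h => AP_zero h,
   fun u v _ _ hcv i hd => AP_cParM hn u v hcv i hd,
   fun u v _ _ hcv i k hik hd => AP_RcParM hn u v hcv i k hik hd⟩

lemma step_lemma {ψ : (Finset (Fin n) → ℝ) → Fin n → ℝ} (hψ : Sat n ψ)
    {g g' : Finset (Fin n) → ℝ}
    (hg : IsMonotoneGame n g) (hg' : IsMonotoneGame n g')
    (hc : ∀ j, contrib g' j = contrib g j)
    {A : Finset (Fin n)} (hA : A.Nonempty) (hAc : ∀ j ∈ A, contrib g j = 1)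
    (hout : ∀ j, contrib g j = 1 → j ∉ A → ∀ S, g' (insert j S) = g (insert j S))
    (hsym : ∀ j ∈ A, ∀ k ∈ A, ∀ S : Finset (Fin n), j ∉ S → k ∉ S →
      g' (insert j S) - g (insert j S) = g' (insert k S) - g (insert k S)) :
    ∀ j, ψ g' j = ψ g j + (if j ∈ A then
      (1 / (2 ^ n - 1 : ℝ)) * ((∑ T ∈ (univ : Finset (Fin n)).powerset, g' T)
        - ∑ T ∈ (univ : Finset (Fin n)).powerset, g T) / A.card else 0) := by
  obtain ⟨hAE, hS, hI, hcP, hRcP⟩ := hψ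
  have hzero : ∀ j, j ∉ A → ψ g' j = ψ g j := by
    intro j hj
    rcases contrib_cases g j with h0 | h1
    · rw [hI g hg j h0, hI g' hg' j (by rw [hc j]; exact h0)]
    · have heq := hout j h1 hj
      have le1 : ψ g' j ≥ ψ g j := hcP g' g hg' hg hc j (fun S => (heq S).ge)
      have le2 : ψ g j ≥ ψ g' j := hcP g g' hg hg' (fun j => (hc j).symm) j (fun S => (heq S).le)
      linarith
  have hinc : ∀ j ∈ A, ∀ k ∈ A, ψ g' j - ψ g j = ψ g' k - ψ g k := by
    intro j hj k hk
    have hck : contrib g' j = contrib g' k := by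
      rw [hc j, hc k, hAc j hj, hAc k hk]
    have h1 := hRcP g' g hg' hg hc j k hck
      (fun S hjS hkS => (hsym j hj k hk S hjS hkS).ge)
    have h2 := hRcP g' g hg' hg hc k j hck.symm
      (fun S hkS hjS => (hsym k hk j hj S hkS hjS).ge)
    linarith
  obtain ⟨j0, hj0⟩ := hA
  have htot : ∑ j, (ψ g' j - ψ g j) = (1 / (2 ^ n - 1 : ℝ)) *
      ((∑ T ∈ (univ : Finset (Fin n)).powerset, g' T)
        - ∑ T ∈ (univ : Finset (Fin n)).powerset, g T) := by
    rw [Finset.sum_sub_distrib, hAE g' hg', hAE g hg]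
    ring
  have hsplit : ∑ j, (ψ g' j - ψ g j) = ∑ j ∈ A, (ψ g' j - ψ g j) := by
    symm
    apply Finset.sum_subset (subset_univ A)
    intro x _ hx
    rw [hzero x hx]
    ring
  have hconst : ∑ j ∈ A, (ψ g' j - ψ g j) = (A.card : ℝ) * (ψ g' j0 - ψ g j0) := by
    rw [Finset.sum_congr rfl (fun j hj => hinc j hj j0 hj0), Finset.sum_const,
      nsmul_eq_mul]
  have hval : ψ g' j0 - ψ g j0 = (1 / (2 ^ n - 1 : ℝ)) *
      ((∑ T ∈ (univ : Finset (Fin n)).powerset, g' T)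
        - ∑ T ∈ (univ : Finset (Fin n)).powerset, g T) / A.card := by
    have hcard : (A.card : ℝ) ≠ 0 := by
      have : 0 < A.card := Finset.card_pos.mpr ⟨j0, hj0⟩
      positivity
    have hkey : (A.card : ℝ) * (ψ g' j0 - ψ g j0) = (1 / (2 ^ n - 1 : ℝ)) *
        ((∑ T ∈ (univ : Finset (Fin n)).powerset, g' T)
          - ∑ T ∈ (univ : Finset (Fin n)).powerset, g T) := by
      rw [← hconst, ← hsplit, htot]
    rw [eq_div_iff hcard]
    linarith
  intro j
  by_cases hj : j ∈ A
  · rw [if_pos hj]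
    have := hinc j hj j0 hj0
    linarith
  · rw [if_neg hj, hzero j hj]
    ring

end APaux
namespace APaux
variable {n : ℕ}

/-- the auxiliary family of games -/
noncomputable def Gg (u : Finset (Fin n) → ℝ) (X : Finset (Finset (Fin n))) :
    Finset (Fin n) → ℝ :=
  fun T => (u univ + 1) * ((T ∩ Pset u).card : ℝ)
    + (if T ∩ Pset u ∈ X then u (T ∩ Pset u) else 0)

lemma chi_nonneg {u : Finset (Fin n) → ℝ} (hu : IsMonotoneGame n u)
    (X : Finset (Finset (Fin n))) (A : Finset (Fin n)) :
    0 ≤ (if A ∈ X then u A else 0) := by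
  split
  · exact u_nonneg hu A
  · exact le_refl 0

lemma chi_le {u : Finset (Fin n) → ℝ} (hu : IsMonotoneGame n u)
    (X : Finset (Finset (Fin n))) (A : Finset (Fin n)) :
    (if A ∈ X then u A else 0) ≤ u univ := by
  split
  · exact hu.2 A univ (subset_univ A)
  · exact u_nonneg hu univ

lemma Gg_mono {u : Finset (Fin n) → ℝ} (hu : IsMonotoneGame n u)
    (X : Finset (Finset (Fin n))) : IsMonotoneGame n (Gg u X) := by
  constructor
  · unfold Gg
    rw [Finset.empty_inter]
    simp [hu.1]
  · intro S T hST
    unfold Gg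
    have hAB : S ∩ Pset u ⊆ T ∩ Pset u :=
      Finset.inter_subset_inter hST (Finset.Subset.refl _)
    rcases eq_or_ne (S ∩ Pset u) (T ∩ Pset u) with heq | hne
    · rw [heq]
    · have hss : S ∩ Pset u ⊂ T ∩ Pset u := Finset.ssubset_iff_subset_ne.mpr ⟨hAB, hne⟩
      have hcard : (S ∩ Pset u).card + 1 ≤ (T ∩ Pset u).card := Finset.card_lt_card hss
      have hcardR : ((S ∩ Pset u).card : ℝ) + 1 ≤ ((T ∩ Pset u).card : ℝ) := by
        exact_mod_cast hcard
      have h1 := chi_le hu X (S ∩ Pset u)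
      have h2 := chi_nonneg hu X (T ∩ Pset u)
      have h3 := u_nonneg hu univ
      nlinarith

lemma Gg_contrib {u : Finset (Fin n) → ℝ} (hu : IsMonotoneGame n u)
    (X : Finset (Finset (Fin n))) : ∀ j, contrib (Gg u X) j = contrib u j := by
  intro j
  rcases contrib_cases u j with h0 | h1
  · rw [h0]
    apply contrib_eq_zero
    intro S
    have hjP : j ∉ Pset u := not_mem_Pset.mpr h0
    unfold Gg
    rw [Finset.insert_inter_of_notMem hjP]
  · rw [h1]
    apply contrib_eq_one
    intro hall
    have hjP : j ∈ Pset u := mem_Pset.mpr h1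
    have h := hall (univ.erase j)
    rw [insert_erase (mem_univ j)] at h
    unfold Gg at h
    rw [Finset.univ_inter, Finset.erase_inter, Finset.univ_inter] at h
    have hc1 : 1 ≤ (Pset u).card := Finset.card_pos.mpr ⟨j, hjP⟩
    have hcard : ((Pset u).erase j).card = (Pset u).card - 1 :=
      Finset.card_erase_of_mem hjP
    have hcardR : (((Pset u).erase j).card : ℝ) = ((Pset u).card : ℝ) - 1 := by
      rw [hcard, Nat.cast_sub hc1, Nat.cast_one]
    rw [hcardR] at h
    have h1 := chi_nonneg hu X (Pset u)
    have h2 := chi_le hu X ((Pset u).erase j)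
    have h3 := u_nonneg hu univ
    nlinarith

lemma base_val {φ : (Finset (Fin n) → ℝ) → Fin n → ℝ} (hφ : Sat n φ)
    {u : Finset (Fin n) → ℝ} (hu : IsMonotoneGame n u) (hP : (Pset u).Nonempty) :
    ∀ j, φ (Gg u ∅) j = if j ∈ Pset u then
      (1 / (2 ^ n - 1 : ℝ)) * (∑ T ∈ (univ : Finset (Fin n)).powerset, Gg u ∅ T)
        / (Pset u).card else 0 := by
  obtain ⟨hAE, hS, hI, hcP, hRcP⟩ := hφ
  have hg := Gg_mono hu (∅ : Finset (Finset (Fin n)))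
  have hzero : ∀ j, j ∉ Pset u → φ (Gg u ∅) j = 0 := by
    intro j hj
    exact hI _ hg j (by rw [Gg_contrib hu]; exact not_mem_Pset.mp hj)
  have hsymval : ∀ j ∈ Pset u, ∀ k ∈ Pset u, φ (Gg u ∅) j = φ (Gg u ∅) k := by
    intro j hj k hk
    apply hS _ hg
    intro S hjS hkS
    unfold Gg
    rw [Finset.insert_inter_of_mem hj, Finset.insert_inter_of_mem hk]
    have hj2 : j ∉ S ∩ Pset u := fun hh => hjS (Finset.mem_of_mem_inter_left hh)
    have hk2 : k ∉ S ∩ Pset u := fun hh => hkS (Finset.mem_of_mem_inter_left hh)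
    rw [Finset.card_insert_of_notMem hj2, Finset.card_insert_of_notMem hk2]
    simp
  obtain ⟨j0, hj0⟩ := hP
  have htot := hAE _ hg
  have hsplit : ∑ j, φ (Gg u ∅) j = ∑ j ∈ Pset u, φ (Gg u ∅) j := by
    symm
    apply Finset.sum_subset (subset_univ _)
    intro x _ hx
    exact hzero x hx
  have hconst : ∑ j ∈ Pset u, φ (Gg u ∅) j = ((Pset u).card : ℝ) * φ (Gg u ∅) j0 := by
    rw [Finset.sum_congr rfl (fun j hj => hsymval j hj j0 hj0), Finset.sum_const,
      nsmul_eq_mul]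
  have hcard : ((Pset u).card : ℝ) ≠ 0 := by
    have : 0 < (Pset u).card := Finset.card_pos.mpr ⟨j0, hj0⟩
    positivity
  have hval : φ (Gg u ∅) j0 = (1 / (2 ^ n - 1 : ℝ)) *
      (∑ T ∈ (univ : Finset (Fin n)).powerset, Gg u ∅ T) / (Pset u).card := by
    rw [eq_div_iff hcard]
    rw [hsplit, hconst] at htot
    linarith
  intro j
  by_cases hj : j ∈ Pset u
  · rw [if_pos hj, hsymval j hj j0 hj0, hval]
  · rw [if_neg hj, hzero j hj]

lemma G_agree (hn : 1 ≤ n) {ψ : (Finset (Fin n) → ℝ) → Fin n → ℝ} (hψ : Sat n ψ)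
    {u : Finset (Fin n) → ℝ} (hu : IsMonotoneGame n u) (hP : (Pset u).Nonempty)
    (X : Finset (Finset (Fin n))) :
    ∀ j, ψ (Gg u X) j = AP (Gg u X) j := by
  induction X using Finset.induction_on with
  | empty =>
    intro j
    rw [base_val hψ hu hP j, base_val (sat_AP hn) hu hP j]
  | @insert A X hAX ih =>
    by_cases hcase : A ⊆ Pset u ∧ A.Nonempty
    · -- genuine step
      have hcontr : ∀ j, contrib (Gg u (insert A X)) j = contrib (Gg u X) j := by
        intro j
        rw [Gg_contrib hu, Gg_contrib hu]
      have hAc : ∀ j ∈ A, contrib (Gg u X) j = 1 := by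
        intro j hj
        rw [Gg_contrib hu]
        exact mem_Pset.mp (hcase.1 hj)
      have hout : ∀ j, contrib (Gg u X) j = 1 → j ∉ A →
          ∀ S, Gg u (insert A X) (insert j S) = Gg u X (insert j S) := by
        intro j hj1 hjA S
        have hjP : j ∈ Pset u := mem_Pset.mpr (by rw [← Gg_contrib hu X]; exact hj1)
        unfold Gg
        have hne : (insert j S) ∩ Pset u ≠ A := by
          intro hh
          apply hjA
          rw [← hh]
          exact Finset.mem_inter.mpr ⟨mem_insert_self _ _, hjP⟩
        have hcond : (insert j S ∩ Pset u ∈ insert A X) ↔ (insert j S ∩ Pset u ∈ X) := by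
          simp [Finset.mem_insert, hne]
        rw [if_congr hcond rfl rfl]
      have hsym : ∀ j ∈ A, ∀ k ∈ A, ∀ S : Finset (Fin n), j ∉ S → k ∉ S →
          Gg u (insert A X) (insert j S) - Gg u X (insert j S)
          = Gg u (insert A X) (insert k S) - Gg u X (insert k S) := by
        intro j hj k hk S hjS hkS
        rcases eq_or_ne j k with rfl | hjk
        · rfl
        have key : ∀ p q : Fin n, p ∈ A → q ∈ A → p ≠ q → p ∉ S → q ∉ S →
            Gg u (insert A X) (insert p S) - Gg u X (insert p S) = 0 := by
          intro p q hp hq hpq hpS hqS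
          unfold Gg
          have hne : (insert p S) ∩ Pset u ≠ A := by
            intro hh
            have : q ∈ insert p S := Finset.mem_of_mem_inter_left (hh ▸ hq)
            rcases Finset.mem_insert.mp this with h | h
            · exact hpq h.symm
            · exact hqS h
          have hcond : (insert p S ∩ Pset u ∈ insert A X) ↔ (insert p S ∩ Pset u ∈ X) := by
            simp [Finset.mem_insert, hne]
          rw [if_congr hcond rfl rfl]
          ring
        rw [key j k hj hk hjk hjS hkS, key k j hk hj hjk.symm hkS hjS]
      have hstep1 := step_lemma hψ (Gg_mono hu X) (Gg_mono hu (insert A X))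
        hcontr hcase.2 hAc hout hsym
      have hstep2 := step_lemma (sat_AP hn) (Gg_mono hu X) (Gg_mono hu (insert A X))
        hcontr hcase.2 hAc hout hsym
      intro j
      rw [hstep1 j, hstep2 j, ih j]
    · -- trivial step: the game does not change
      have heq : Gg u (insert A X) = Gg u X := by
        funext T
        unfold Gg
        by_cases hTA : T ∩ Pset u = A
        · have hA0 : A = ∅ := by
            by_contra hne
            exact hcase ⟨hTA ▸ Finset.inter_subset_right,
              Finset.nonempty_iff_ne_empty.mpr hne⟩
          have hval0 : u (T ∩ Pset u) = 0 := by rw [hTA, hA0, hu.1]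
          have e1 : (if T ∩ Pset u ∈ insert A X then u (T ∩ Pset u) else 0) = 0 := by
            split <;> simp [hval0]
          have e2 : (if T ∩ Pset u ∈ X then u (T ∩ Pset u) else 0) = 0 := by
            split <;> simp [hval0]
          rw [e1, e2]
        · have hcond : (T ∩ Pset u ∈ insert A X) ↔ (T ∩ Pset u ∈ X) := by
            simp [Finset.mem_insert, hTA]
          rw [if_congr hcond rfl rfl]
      rw [heq]
      exact ih

lemma forward (hn : 1 ≤ n) {ψ : (Finset (Fin n) → ℝ) → Fin n → ℝ} (hψ : Sat n ψ)
    (u : Finset (Fin n) → ℝ) (hu : IsMonotoneGame n u) (i : Fin n) :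
    ψ u i = AP u i := by
  by_cases hP : (Pset u).Nonempty
  · -- relate u and Gg u univ via the step lemma with A = Pset u
    have hGc : ∀ j, contrib (Gg u univ) j = contrib u j := Gg_contrib hu univ
    have hAc : ∀ j ∈ Pset u, contrib u j = 1 := fun j hj => mem_Pset.mp hj
    have hout : ∀ j, contrib u j = 1 → j ∉ Pset u →
        ∀ S, Gg u univ (insert j S) = u (insert j S) := by
      intro j hj1 hjP
      exact absurd (mem_Pset.mpr hj1) hjP
    have hsym : ∀ j ∈ Pset u, ∀ k ∈ Pset u, ∀ S : Finset (Fin n), j ∉ S → k ∉ S →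
        Gg u univ (insert j S) - u (insert j S)
        = Gg u univ (insert k S) - u (insert k S) := by
      intro j hj k hk S hjS hkS
      have key : ∀ p : Fin n, p ∈ Pset u → p ∉ S →
          Gg u univ (insert p S) - u (insert p S)
          = (u univ + 1) * (((S ∩ Pset u).card : ℝ) + 1) := by
        intro p hp hpS
        unfold Gg
        rw [if_pos (Finset.mem_univ _)]
        rw [← restrict (u := u) (insert p S)]
        rw [Finset.insert_inter_of_mem hp]
        have hp2 : p ∉ S ∩ Pset u := fun hh => hpS (Finset.mem_of_mem_inter_left hh)
        rw [Finset.card_insert_of_notMem hp2]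
        push_cast
        ring
      rw [key j hj hjS, key k hk hkS]
    have hstep1 := step_lemma hψ hu (Gg_mono hu univ) hGc hP hAc hout hsym
    have hstep2 := step_lemma (sat_AP hn) hu (Gg_mono hu univ) hGc hP hAc hout hsym
    have hagree := G_agree hn hψ hu hP univ i
    have h1 := hstep1 i
    have h2 := hstep2 i
    rw [hagree] at h1
    by_cases hi : i ∈ Pset u
    · rw [if_pos hi] at h1 h2
      linarith
    · rw [if_neg hi] at h1 h2
      linarith
  · -- no contributors at all
    have hci : contrib u i = 0 := by
      apply not_mem_Pset.mp
      intro hh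
      exact hP ⟨i, hh⟩
    rw [hψ.2.2.1 u hu i hci, AP_zero hci]

end APaux

/-- A solution on the class of monotone games satisfies average efficiency, symmetry,
invariance, c-participation monotonicity and relative c-participation monotonicity iff
it is the average participation solution; in particular AP is the unique such solution. -/
theorem ap_uniqueness (n : ℕ) (hn : 1 ≤ n)
    (ψ : (Finset (Fin n) → ℝ) → Fin n → ℝ) :
    ((∀ u, IsMonotoneGame n u →
        ∑ i, ψ u i =
          (1 / (2 ^ n - 1 : ℝ)) * ∑ S ∈ (Finset.univ : Finset (Fin n)).powerset, u S) ∧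
     (∀ u, IsMonotoneGame n u → ∀ i j : Fin n,
        (∀ S : Finset (Fin n), i ∉ S → j ∉ S → u (insert i S) = u (insert j S)) →
        ψ u i = ψ u j) ∧
     (∀ u, IsMonotoneGame n u → ∀ i : Fin n, contrib u i = 0 → ψ u i = 0) ∧
     (∀ u v, IsMonotoneGame n u → IsMonotoneGame n v →
        (∀ j : Fin n, contrib u j = contrib v j) → ∀ i : Fin n,
        (∀ S : Finset (Fin n), u (insert i S) ≥ v (insert i S)) → ψ u i ≥ ψ v i) ∧
     (∀ u v, IsMonotoneGame n u → IsMonotoneGame n v →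
        (∀ j : Fin n, contrib u j = contrib v j) → ∀ i k : Fin n,
        contrib u i = contrib u k →
        (∀ S : Finset (Fin n), i ∉ S → k ∉ S →
          u (insert i S) - v (insert i S) ≥ u (insert k S) - v (insert k S)) →
        ψ u i - ψ v i ≥ ψ u k - ψ v k)) ↔
    (∀ u, IsMonotoneGame n u → ∀ i, ψ u i = AP u i) := by
  constructor
  · intro h u hu i
    exact APaux.forward hn h u hu i
  · intro h
    refine ⟨?_, ?_, ?_, ?_, ?_⟩
    · intro u hu
      rw [Finset.sum_congr rfl (fun i _ => h u hu i)]
      exact APaux.AP_AE hn u hu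
    · intro u hu i j hs
      rw [h u hu i, h u hu j]
      exact APaux.AP_S u i j hs
    · intro u hu i hc
      rw [h u hu i]
      exact APaux.AP_zero hc
    · intro u v hu hv hcv i hd
      rw [h u hu i, h v hv i]
      exact APaux.AP_cParM hn u v hcv i hd
    · intro u v hu hv hcv i k hik hd
      rw [h u hu i, h v hv i, h u hu k, h v hv k]
      exact APaux.AP_RcParM hn u v hcv i k hik hd
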